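/- Define kl3 : ℝ → ℝ by kl3(x) = x − 1 − Real.log x. If 0 < x < 1 < y and kl3(x) = kl3(y), then 1 − x < y − 1. -/

import Mathlib

noncomputable def kl3 (x : ℝ) : ℝ := x - 1 - Real.log x

lemma kl3_strictMonoOn : StrictMonoOn kl3 (Set.Ici 1) := by
  apply strictMonoOn_of_deriv_pos (convex_Ici 1)
  · apply ContinuousOn.sub (by fun_prop)
    apply Real.continuousOn_log.mono
    intro t ht
    simp only [Set.mem_Ici] at ht
    simp only [Set.mem_compl_iff, Set.mem_singleton_iff]
    linarith
  · intro t ht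
    rw [interior_Ici, Set.mem_Ioi] at ht
    have h0 : t ≠ 0 := by linarith
    have hd : HasDerivAt kl3 (1 - t⁻¹) t := by
      exact ((hasDerivAt_id t).sub_const 1).sub (Real.hasDerivAt_log h0)
    rw [hd.deriv]
    have : t⁻¹ < 1 := by
      rw [inv_lt_one_iff₀]; right; exact ht
    linarith

lemma aux_strictAntiOn (x : ℝ) (hx0 : 0 < x) :
    StrictAntiOn (fun t : ℝ => Real.log (2 - t) - Real.log t - 2 * (1 - t))
      (Set.Icc x 1) := by
  apply strictAntiOn_of_deriv_neg (convex_Icc x 1)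
  · apply ContinuousOn.sub (ContinuousOn.sub _ _) (by fun_prop)
    · apply Real.continuousOn_log.comp (f := fun t : ℝ => 2 - t) (by fun_prop)
      intro t ht
      simp only [Set.mem_Icc] at ht
      simp only [Set.mem_compl_iff, Set.mem_singleton_iff]
      intro hc
      linarith
    · apply Real.continuousOn_log.mono
      intro t ht
      simp only [Set.mem_Icc] at ht
      intro hc
      simp only [Set.mem_singleton_iff] at hc
      linarith
  · intro t ht
    rw [interior_Icc, Set.mem_Ioo] at ht
    obtain ⟨ht0, ht1⟩ := ht
    have htpos : 0 < t := lt_trans hx0 ht0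
    have h2t : 0 < 2 - t := by linarith
    have hd1 : HasDerivAt (fun t : ℝ => Real.log (2 - t)) ((2 - t)⁻¹ * (-1)) t := by
      exact (Real.hasDerivAt_log (ne_of_gt h2t)).comp t
        (((hasDerivAt_id t).const_sub 2))
    have hd : HasDerivAt (fun t : ℝ => Real.log (2 - t) - Real.log t - 2 * (1 - t))
        ((2 - t)⁻¹ * (-1) - t⁻¹ - 2 * (-1)) t := by
      exact (hd1.sub (Real.hasDerivAt_log (ne_of_gt htpos))).sub
        (((hasDerivAt_id t).const_sub 1).const_mul 2)
    rw [hd.deriv]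
    have hkey : t * (2 - t) < 1 := by nlinarith [sq_nonneg (1 - t)]
    have h1 : (2 - t)⁻¹ * (-1) - t⁻¹ = -(t + (2 - t)) / (t * (2 - t)) := by
      field_simp; ring
    rw [h1]
    have hprodpos : 0 < t * (2 - t) := mul_pos htpos h2t
    have h2 : -(t + (2 - t)) / (t * (2 - t)) < -2 := by
      rw [div_lt_iff₀ hprodpos]; nlinarith
    linarith

/-- Asymmetry of KL3-induced clipping ranges: the upper range deviates more
from 1 than the lower range. -/
theorem kl3_asymmetry (x y : ℝ) (hx0 : 0 < x) (hx1 : x < 1) (hy : 1 < y)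
    (h : kl3 x = kl3 y) : 1 - x < y - 1 := by
  have hanti := aux_strictAntiOn x hx0
  have hf : (0 : ℝ) < Real.log (2 - x) - Real.log x - 2 * (1 - x) := by
    have h' := hanti (Set.mem_Icc.mpr ⟨le_refl x, le_of_lt hx1⟩)
      (Set.mem_Icc.mpr ⟨le_of_lt hx1, le_refl 1⟩) hx1
    norm_num [Real.log_one] at h'
    linarith
  -- kl3 (2 - x) < kl3 x = kl3 y
  have hkl : kl3 (2 - x) < kl3 y := by
    rw [← h]
    unfold kl3
    linarith
  have h2x : (2 : ℝ) - x ∈ Set.Ici (1 : ℝ) := by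
    simp only [Set.mem_Ici]; linarith
  have hyI : y ∈ Set.Ici (1 : ℝ) := le_of_lt hy
  have := (kl3_strictMonoOn.lt_iff_lt h2x hyI).mp hkl
  linarith
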